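/- With a(p,q,r) as above and k as above, one has k(p+1,r,q) = a(p,q,r)·(p+2)(p+q+3)(p+r+1)(p+r+2)r for all nonnegative integers p, q, r with q, r ≥ 1. -/
import Mathlib


/-- The hyperfactorial `n!` = ∏_{k=0}^{n-1} k!`, as a rational number. -/
def hfQ (n : ℕ) : ℚ := ∏ k ∈ Finset.range n, (Nat.factorial k : ℚ)

/-- `a(p,q,r) = [(p+q+r+2)!` r!` q!` (p+2)!` / ((p+q+4)!` (p+r+4)!` (q+r)!`)] ·
(p+q+1)! (p+q+2)! (p+r+3)! (p+r)!`. -/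
def aZ (p q r : ℕ) : ℚ :=
  hfQ (p + q + r + 2) * hfQ r * hfQ q * hfQ (p + 2) /
      (hfQ (p + q + 4) * hfQ (p + r + 4) * hfQ (q + r)) *
    (Nat.factorial (p + q + 1) : ℚ) * (Nat.factorial (p + q + 2) : ℚ) *
    (Nat.factorial (p + r + 3) : ℚ) * (Nat.factorial (p + r) : ℚ)

/-- MacMahon's box formula expression. -/
def hMac (p q r : ℕ) : ℚ :=
  hfQ p * hfQ q * hfQ r * hfQ (p + q + r) /
    (hfQ (p + q) * hfQ (p + r) * hfQ (q + r))

/-- `k(p,q,r) = [(p+q+r+1)!` (p+1)!` q!` r!` / ((p+q+2)!` (p+r+2)!` (q+r)!`)] ·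
(p+q)! (p+r)! · q(p+1)(p+q+1)`. -/
def kZ (p q r : ℕ) : ℚ :=
  hfQ (p + q + r + 1) * hfQ (p + 1) * hfQ q * hfQ r /
      (hfQ (p + q + 2) * hfQ (p + r + 2) * hfQ (q + r)) *
    (Nat.factorial (p + q) : ℚ) * (Nat.factorial (p + r) : ℚ) *
    ((q * (p + 1) * (p + q + 1) : ℕ) : ℚ)


lemma hfQ_succ (n : ℕ) : hfQ (n + 1) = hfQ n * (Nat.factorial n : ℚ) :=
  Finset.prod_range_succ _ n

lemma hfQ_ne_zero (n : ℕ) : hfQ n ≠ 0 :=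
  Finset.prod_ne_zero_iff.mpr fun k _ => Nat.cast_ne_zero.mpr (Nat.factorial_ne_zero k)

/-- `k(p+1,r,q) = a(p,q,r)·(p+2)(p+q+3)(p+r+1)(p+r+2)r` for nonnegative `p`
and positive `q, r`. -/
theorem kZ_swap_eq_aZ (p q r : ℕ) (hq : 1 ≤ q) (hr : 1 ≤ r) :
    kZ (p + 1) r q =
      aZ p q r * (((p + 2) * (p + q + 3) * (p + r + 1) * (p + r + 2) * r : ℕ) : ℚ) := by
  unfold kZ aZ
  rw [show p + 1 + r + q + 1 = p + q + r + 2 by omega,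
      show p + 1 + 1 = p + 2 by omega,
      show p + 1 + r + 2 = p + r + 3 by omega,
      show p + 1 + q + 2 = p + q + 3 by omega,
      show r + q = q + r by omega,
      show p + 1 + r = p + r + 1 by omega,
      show p + 1 + q = p + q + 1 by omega,
      show p + q + 4 = (p + q + 3) + 1 by omega,
      show p + r + 4 = (p + r + 3) + 1 by omega,
      hfQ_succ (p + q + 3), hfQ_succ (p + r + 3),
      show p + q + 3 = (p + q + 2) + 1 from rfl,
      show p + r + 1 = (p + r) + 1 from rfl,
      Nat.factorial_succ (p + q + 2), Nat.factorial_succ (p + r)]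
  have h1 := hfQ_ne_zero (p + q + 2 + 1)
  have h2 := hfQ_ne_zero (p + r + 3)
  have h3 := hfQ_ne_zero (q + r)
  have f1 : (Nat.factorial (p + q + 2) : ℚ) ≠ 0 := Nat.cast_ne_zero.mpr (Nat.factorial_ne_zero _)
  have f2 : (Nat.factorial (p + r) : ℚ) ≠ 0 := Nat.cast_ne_zero.mpr (Nat.factorial_ne_zero _)
  field_simp
  push_cast
  ring
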